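/- A pair (P₁,P₂) of non-empty disjoint open convex subsets of ℝ^d satisfies closure(P₁) ∪ closure(P₂) = ℝ^d if and only if there exist a ∈ ℝ^d, a ≠ 0, and b ∈ ℝ with P₁ = {x : a·x < b} and P₂ = {x : a·x > b} (or with the roles of P₁, P₂ swapped). -/

import Mathlib

open scoped RealInnerProductSpace

/-- For a convex set with nonempty interior, the interior of its closure is contained in its
interior. -/
lemma aux_interior_closure_subset {E : Type*} [NormedAddCommGroup E] [NormedSpace ℝ E]
    {s : Set E} (hs : Convex ℝ s) (hne : (interior s).Nonempty) :
    interior (closure s) ⊆ interior s := by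
  obtain ⟨x, hx⟩ := hne
  intro y hy
  rcases eq_or_ne y x with rfl | hxy
  · exact hx
  obtain ⟨ε, hε, hball⟩ := Metric.isOpen_iff.1 isOpen_interior y hy
  have hyx : (0:ℝ) < ‖y - x‖ := by
    rw [norm_pos_iff]; exact sub_ne_zero.2 hxy
  set t : ℝ := ε / (2 * ‖y - x‖) with ht
  have htpos : 0 < t := div_pos hε (by positivity)
  set z : E := y + t • (y - x) with hz
  have hzmem : z ∈ closure s := by
    apply interior_subset
    apply hball
    rw [Metric.mem_ball, dist_eq_norm]
    have hnorm : ‖z - y‖ = t * ‖y - x‖ := by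
      rw [show z - y = t • (y - x) by rw [hz]; abel, norm_smul,
        Real.norm_of_nonneg htpos.le]
    have heq : t * ‖y - x‖ = ε / 2 := by
      rw [ht]; field_simp
    rw [hnorm, heq]; linarith
  have h1t : (1 + t) ≠ 0 := by positivity
  have hcombo : (t / (1 + t)) • x + (1 / (1 + t)) • z = y := by
    rw [hz]; match_scalars <;> field_simp <;> ring
  have key : (t / (1 + t)) • x + (1 / (1 + t)) • z ∈ interior s := by
    apply hs.combo_interior_closure_mem_interior hx hzmem
    · exact div_pos htpos (by linarith)
    · exact (div_pos one_pos (by linarith)).le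
    · field_simp; ring
  rwa [hcombo] at key

/-- The closed half-space is contained in the closure of the open half-space. -/
lemma aux_le_subset_closure_lt {d : ℕ} (a : EuclideanSpace ℝ (Fin d)) (ha : a ≠ 0) (b : ℝ) :
    {x : EuclideanSpace ℝ (Fin d) | ⟪a, x⟫ ≤ b} ⊆ closure {x | ⟪a, x⟫ < b} := by
  intro x hx
  have haa : (0:ℝ) < ⟪a, a⟫ := by
    rw [real_inner_self_eq_norm_sq]
    have : 0 < ‖a‖ := norm_pos_iff.2 ha
    positivity
  have htend : Filter.Tendsto (fun n : ℕ => x - (1 / (n + 1) : ℝ) • a)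
      Filter.atTop (nhds x) := by
    have h0 : Filter.Tendsto (fun n : ℕ => (1 / (n + 1) : ℝ)) Filter.atTop (nhds 0) :=
      tendsto_one_div_add_atTop_nhds_zero_nat
    have h1 := h0.smul_const a
    rw [zero_smul] at h1
    have h2 := (tendsto_const_nhds (x := x) (f := Filter.atTop (α := ℕ))).sub h1
    simpa using h2
  refine mem_closure_of_tendsto htend (Filter.Eventually.of_forall fun n => ?_)
  simp only [Set.mem_setOf_eq, inner_sub_right, inner_smul_right]
  have hpos : (0:ℝ) < 1 / (n + 1) := by positivity
  have : 0 < (1 / (n + 1) : ℝ) * ⟪a, a⟫ := by positivity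
  calc ⟪a, x⟫ - (1 / (n + 1) : ℝ) * ⟪a, a⟫ < ⟪a, x⟫ := by linarith
    _ ≤ b := hx

/-- The two closed half-spaces cover. -/
lemma aux_halfspaces_cover {d : ℕ} (a : EuclideanSpace ℝ (Fin d)) (ha : a ≠ 0) (b : ℝ) :
    closure {x : EuclideanSpace ℝ (Fin d) | ⟪a, x⟫ < b} ∪ closure {x | b < ⟪a, x⟫}
      = Set.univ := by
  apply Set.eq_univ_of_forall
  intro x
  rcases le_or_gt ⟪a, x⟫ b with h | h
  · exact Or.inl (aux_le_subset_closure_lt a ha b h)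
  · exact Or.inr (subset_closure h)

theorem two_partition_iff_halfspaces
    (d : ℕ) (P₁ P₂ : Set (EuclideanSpace ℝ (Fin d)))
    (h₁ne : P₁.Nonempty) (h₂ne : P₂.Nonempty)
    (h₁o : IsOpen P₁) (h₂o : IsOpen P₂)
    (h₁c : Convex ℝ P₁) (h₂c : Convex ℝ P₂)
    (hdisj : Disjoint P₁ P₂) :
    closure P₁ ∪ closure P₂ = Set.univ ↔
      ∃ (a : EuclideanSpace ℝ (Fin d)) (b : ℝ), a ≠ 0 ∧
        ((P₁ = {x | ⟪a, x⟫ < b} ∧ P₂ = {x | b < ⟪a, x⟫}) ∨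
         (P₂ = {x | ⟪a, x⟫ < b} ∧ P₁ = {x | b < ⟪a, x⟫})) := by
  constructor
  · intro hcover
    obtain ⟨f, u, hf₁, hf₂⟩ := geometric_hahn_banach_open_open h₁c h₁o h₂c h₂o hdisj
    obtain ⟨x₁, hx₁⟩ := h₁ne
    obtain ⟨x₂, hx₂⟩ := h₂ne
    have hfne : f ≠ 0 := by
      rintro rfl
      have h1 := hf₁ x₁ hx₁
      have h2 := hf₂ x₂ hx₂
      simp only [ContinuousLinearMap.zero_apply] at h1 h2
      linarith
    set a : EuclideanSpace ℝ (Fin d) := (InnerProductSpace.toDual ℝ _).symm f with hadef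
    have hfa : ∀ x, ⟪a, x⟫ = f x := fun x => InnerProductSpace.toDual_symm_apply
    have hane : a ≠ 0 := by
      intro h
      apply hfne
      have := congrArg (InnerProductSpace.toDual ℝ (EuclideanSpace ℝ (Fin d))) h
      simpa [hadef] using this
    -- closure bounds
    have hcl₁ : closure P₁ ⊆ {x | f x ≤ u} :=
      closure_minimal (fun x hx => (hf₁ x hx).le)
        (isClosed_le f.continuous continuous_const)
    have hcl₂ : closure P₂ ⊆ {x | u ≤ f x} :=
      closure_minimal (fun x hx => (hf₂ x hx).le)
        (isClosed_le continuous_const f.continuous)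
    have hsub₁ : {x | f x < u} ⊆ P₁ := by
      have hsub : {x | f x < u} ⊆ closure P₁ := by
        intro x hx
        have hxuniv : x ∈ closure P₁ ∪ closure P₂ := hcover ▸ Set.mem_univ x
        rcases hxuniv with h | h
        · exact h
        · have hub : u ≤ f x := hcl₂ h
          exact (not_le.2 hx hub).elim
      have hopen : IsOpen {x : EuclideanSpace ℝ (Fin d) | f x < u} :=
        isOpen_lt f.continuous continuous_const
      have : {x | f x < u} ⊆ interior (closure P₁) :=
        interior_maximal hsub hopen
      refine this.trans ((aux_interior_closure_subset h₁c ?_).trans interior_subset)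
      exact ⟨x₁, by rwa [h₁o.interior_eq]⟩
    have hsub₂ : {x | u < f x} ⊆ P₂ := by
      have hsub : {x | u < f x} ⊆ closure P₂ := by
        intro x hx
        have hxuniv : x ∈ closure P₁ ∪ closure P₂ := hcover ▸ Set.mem_univ x
        rcases hxuniv with h | h
        · have hub : f x ≤ u := hcl₁ h
          exact (not_le.2 hx hub).elim
        · exact h
      have hopen : IsOpen {x : EuclideanSpace ℝ (Fin d) | u < f x} :=
        isOpen_lt continuous_const f.continuous
      have : {x | u < f x} ⊆ interior (closure P₂) :=
        interior_maximal hsub hopen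
      refine this.trans ((aux_interior_closure_subset h₂c ?_).trans interior_subset)
      exact ⟨x₂, by rwa [h₂o.interior_eq]⟩
    refine ⟨a, u, hane, Or.inl ⟨?_, ?_⟩⟩
    · apply Set.Subset.antisymm
      · intro x hx; simp only [Set.mem_setOf_eq, hfa]; exact hf₁ x hx
      · intro x hx; exact hsub₁ (by simpa [hfa] using hx)
    · apply Set.Subset.antisymm
      · intro x hx; simp only [Set.mem_setOf_eq, hfa]; exact hf₂ x hx
      · intro x hx; exact hsub₂ (by simpa [hfa] using hx)
  · rintro ⟨a, b, hane, ⟨h1, h2⟩ | ⟨h1, h2⟩⟩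
    · rw [h1, h2]; exact aux_halfspaces_cover a hane b
    · rw [h1, h2, Set.union_comm]; exact aux_halfspaces_cover a hane b
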